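/- arXiv:1310.2276 — 11 statements merged into one kernel-verified Lean document; each statement's English description precedes it below -/
import Mathlib

section
/- For every integer m, the rational functions 𝒰_m and 𝒱_m are well defined and nonzero as elements of ℂ(y), and the pair {u,v} = {𝒰_m, 𝒱_m} solves the coupled Painlevé-II system; that is, 𝒰_m'' + 2·𝒰_m²·𝒱_m + (1/3)·y·𝒰_m = 0 and 𝒱_m'' + 2·𝒰_m·𝒱_m² + (1/3)·y·𝒱_m = 0 hold as identities in ℂ(y). -/
/-- The derivative on the field `ℂ(y)` of complex rational functions, computed via the
quotient rule applied to the lowest-terms representation `num/denom`. -/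
noncomputable def rfD (f : RatFunc ℂ) : RatFunc ℂ :=
  (algebraMap (Polynomial ℂ) (RatFunc ℂ) (Polynomial.derivative f.num) *
      algebraMap (Polynomial ℂ) (RatFunc ℂ) f.denom -
    algebraMap (Polynomial ℂ) (RatFunc ℂ) f.num *
      algebraMap (Polynomial ℂ) (RatFunc ℂ) (Polynomial.derivative f.denom)) /
    algebraMap (Polynomial ℂ) (RatFunc ℂ) f.denom ^ 2

/-- The pairs `(𝒰_m, 𝒱_m)` for `m = 0, 1, 2, …` via the forward recursion. -/
noncomputable def UVpos : ℕ → RatFunc ℂ × RatFunc ℂ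
  | 0 => (1, -RatFunc.X / 6)
  | n + 1 =>
    (-(1 / 6 : RatFunc ℂ) * RatFunc.X * (UVpos n).1 - rfD (UVpos n).1 ^ 2 / (UVpos n).1 +
        (1 / 2 : RatFunc ℂ) * rfD (rfD (UVpos n).1),
      1 / (UVpos n).1)

/-- The pairs `(𝒰_{-m}, 𝒱_{-m})` for `m = 0, 1, 2, …` via the backward recursion. -/
noncomputable def UVneg : ℕ → RatFunc ℂ × RatFunc ℂ
  | 0 => (1, -RatFunc.X / 6)
  | n + 1 =>
    (1 / (UVneg n).2,
      (1 / 2 : RatFunc ℂ) * rfD (rfD (UVneg n).2) - rfD (UVneg n).2 ^ 2 / (UVneg n).2 -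
        (1 / 6 : RatFunc ℂ) * RatFunc.X * (UVneg n).2)

/-- The rational function `𝒰_m ∈ ℂ(y)`, `m ∈ ℤ`. -/
noncomputable def 𝒰 (m : ℤ) : RatFunc ℂ :=
  if 0 ≤ m then (UVpos m.toNat).1 else (UVneg (-m).toNat).1

/-- The rational function `𝒱_m ∈ ℂ(y)`, `m ∈ ℤ`. -/
noncomputable def 𝒱 (m : ℤ) : RatFunc ℂ :=
  if 0 ≤ m then (UVpos m.toNat).2 else (UVneg (-m).toNat).2

open Polynomial RatFunc

instance : CharZero (RatFunc ℂ) :=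
  charZero_of_injective_algebraMap (RatFunc.algebraMap_injective ℂ)

local notation "aM" => algebraMap (Polynomial ℂ) (RatFunc ℂ)

lemma rfD_spec {p q : Polynomial ℂ} (hq : q ≠ 0) {f : RatFunc ℂ}
    (hf : f = aM p / aM q) :
    rfD f = (aM (derivative p) * aM q - aM p * aM (derivative q)) / aM q ^ 2 := by
  have hqz : aM q ≠ 0 := RatFunc.algebraMap_ne_zero hq
  have hdz : aM f.denom ≠ 0 := RatFunc.algebraMap_ne_zero f.denom_ne_zero
  have h1 : f.num * q = p * f.denom := by
    apply RatFunc.algebraMap_injective ℂ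
    rw [map_mul, map_mul]
    have hf' : aM f.num / aM f.denom = aM p / aM q := by
      rw [RatFunc.num_div_denom, hf]
    rw [div_eq_div_iff hdz hqz] at hf'
    exact hf' 
  have h2 : derivative f.num * q + f.num * derivative q
      = derivative p * f.denom + p * derivative f.denom := by
    have := congrArg derivative h1
    simpa [derivative_mul] using this
  have h1R : aM f.num * aM q = aM p * aM f.denom := by
    rw [← map_mul, ← map_mul, h1]
  have h2R : aM (derivative f.num) * aM q + aM f.num * aM (derivative q)
      = aM (derivative p) * aM f.denom + aM p * aM (derivative f.denom) := by
    rw [← map_mul, ← map_mul, ← map_mul, ← map_mul, ← map_add, ← map_add, h2]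
  rw [rfD, div_eq_div_iff (pow_ne_zero 2 hdz) (pow_ne_zero 2 hqz)]
  linear_combination (aM f.denom * aM q) * h2R -
    (aM f.denom * aM (derivative q) + aM (derivative f.denom) * aM q) * h1R

lemma rfD_algebraMap (p : Polynomial ℂ) : rfD (aM p) = aM (derivative p) := by
  rw [rfD_spec (q := 1) one_ne_zero (f := aM p)
    (show aM p = aM p / aM 1 by rw [map_one, div_one])]
  simp

lemma rfD_X : rfD RatFunc.X = 1 := by
  rw [← RatFunc.algebraMap_X, rfD_algebraMap]; simp

lemma rfD_one : rfD (1 : RatFunc ℂ) = 0 := by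
  rw [← map_one aM, rfD_algebraMap]; simp

lemma rfD_zero : rfD (0 : RatFunc ℂ) = 0 := by
  rw [← map_zero aM, rfD_algebraMap]; simp

lemma rfD_natCast (n : ℕ) : rfD (n : RatFunc ℂ) = 0 := by
  rw [← map_natCast aM n, rfD_algebraMap]; simp

lemma rfD_ofNat (n : ℕ) [n.AtLeastTwo] :
    rfD (no_index (OfNat.ofNat n) : RatFunc ℂ) = 0 := by
  rw [← Nat.cast_ofNat]; exact rfD_natCast n

lemma rfD_C (r : ℂ) : rfD (RatFunc.C r) = 0 := by
  rw [← RatFunc.algebraMap_C, rfD_algebraMap]; simp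

lemma rfD_rep (f : RatFunc ℂ) : ∃ p q : Polynomial ℂ, q ≠ 0 ∧ f = aM p / aM q :=
  ⟨f.num, f.denom, f.denom_ne_zero, (RatFunc.num_div_denom f).symm⟩

lemma rfD_dr (p : Polynomial ℂ) {q : Polynomial ℂ} (hq : q ≠ 0) :
    rfD (aM p / aM q) =
      (aM (derivative p) * aM q - aM p * aM (derivative q)) / aM q ^ 2 :=
  rfD_spec hq rfl

lemma rfD_add (f g : RatFunc ℂ) : rfD (f + g) = rfD f + rfD g := by
  obtain ⟨p1, q1, hq1, rfl⟩ := rfD_rep f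
  obtain ⟨p2, q2, hq2, rfl⟩ := rfD_rep g
  have h1 : aM q1 ≠ 0 := RatFunc.algebraMap_ne_zero hq1
  have h2 : aM q2 ≠ 0 := RatFunc.algebraMap_ne_zero hq2
  rw [div_add_div _ _ h1 h2, ← map_mul, ← map_mul, ← map_mul, ← map_add,
    rfD_dr _ (mul_ne_zero hq1 hq2), rfD_dr _ hq1, rfD_dr _ hq2]
  simp only [derivative_add, derivative_mul, map_add, map_mul]
  field_simp
  ring

lemma rfD_mul (f g : RatFunc ℂ) : rfD (f * g) = rfD f * g + f * rfD g := by
  obtain ⟨p1, q1, hq1, rfl⟩ := rfD_rep f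
  obtain ⟨p2, q2, hq2, rfl⟩ := rfD_rep g
  have h1 : aM q1 ≠ 0 := RatFunc.algebraMap_ne_zero hq1
  have h2 : aM q2 ≠ 0 := RatFunc.algebraMap_ne_zero hq2
  rw [div_mul_div_comm, ← map_mul, ← map_mul,
    rfD_dr _ (mul_ne_zero hq1 hq2), rfD_dr _ hq1, rfD_dr _ hq2]
  simp only [derivative_mul, map_add, map_mul]
  field_simp
  ring

lemma rfD_neg (f : RatFunc ℂ) : rfD (-f) = -rfD f := by
  have h : (-1 : RatFunc ℂ) = aM (-1) := by rw [map_neg, map_one]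
  rw [show -f = -1 * f by ring, rfD_mul, h, rfD_algebraMap]
  simp

lemma rfD_sub (f g : RatFunc ℂ) : rfD (f - g) = rfD f - rfD g := by
  rw [sub_eq_add_neg, rfD_add, rfD_neg, sub_eq_add_neg]

lemma rfD_inv (f : RatFunc ℂ) : rfD f⁻¹ = -rfD f / f ^ 2 := by
  rcases eq_or_ne f 0 with rfl | hf
  · simp [rfD_zero]
  · obtain ⟨p, q, hq, rfl⟩ := rfD_rep f
    have h1 : aM q ≠ 0 := RatFunc.algebraMap_ne_zero hq
    have hp : p ≠ 0 := by
      rintro rfl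
      simp at hf
    have h2 : aM p ≠ 0 := RatFunc.algebraMap_ne_zero hp
    rw [inv_div, rfD_dr _ hp, rfD_dr _ hq]
    field_simp
    ring

lemma rfD_div (f g : RatFunc ℂ) : rfD (f / g) = (rfD f * g - f * rfD g) / g ^ 2 := by
  rcases eq_or_ne g 0 with rfl | hg
  · simp [rfD_zero]
  · rw [div_eq_mul_inv, rfD_mul, rfD_inv]
    field_simp
    ring

lemma rfD_sq (f : RatFunc ℂ) : rfD (f ^ 2) = 2 * f * rfD f := by
  rw [sq, rfD_mul]; ring

def isGood (u v : RatFunc ℂ) (c : ℂ) : Prop :=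
  u ≠ 0 ∧ v ≠ 0 ∧
    rfD (rfD u) + 2 * u ^ 2 * v + (1 / 3 : RatFunc ℂ) * RatFunc.X * u = 0 ∧
    rfD (rfD v) + 2 * u * v ^ 2 + (1 / 3 : RatFunc ℂ) * RatFunc.X * v = 0 ∧
    rfD u * v - u * rfD v = RatFunc.C c

lemma C_ne_zero' {z : ℂ} (hz : z ≠ 0) : RatFunc.C z ≠ 0 := by
  rw [← RatFunc.algebraMap_C]
  exact RatFunc.algebraMap_ne_zero (by simpa using hz)

lemma C_third : RatFunc.C ((1 : ℂ) / 3) = (1 / 3 : RatFunc ℂ) := by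
  rw [map_div₀, map_one, map_ofNat]

lemma C_sixth : RatFunc.C ((1 : ℂ) / 6) = (1 / 6 : RatFunc ℂ) := by
  rw [map_div₀, map_one, map_ofNat]

lemma base_good : isGood 1 (-RatFunc.X / 6) (1 / 6) := by
  have hX : (RatFunc.X : RatFunc ℂ) ≠ 0 := RatFunc.X_ne_zero
  have h6 : (6 : RatFunc ℂ) ≠ 0 := by norm_num
  refine ⟨one_ne_zero, div_ne_zero (neg_ne_zero.mpr hX) h6, ?_, ?_, ?_⟩
  · simp only [rfD_one, rfD_zero]
    ring
  · simp only [rfD_add, rfD_sub, rfD_neg, rfD_mul, rfD_div, rfD_sq, rfD_X, rfD_one,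
      rfD_natCast, rfD_ofNat, rfD_C, rfD_zero]
    field_simp
    try ring_nf
    try field_simp
    try ring
  · simp only [rfD_add, rfD_sub, rfD_neg, rfD_mul, rfD_div, rfD_sq, rfD_X, rfD_one,
      rfD_natCast, rfD_ofNat, rfD_C, rfD_zero, C_sixth]
    field_simp
    try ring_nf
    try field_simp
    try ring

lemma swap_good {u v : RatFunc ℂ} {c : ℂ} (h : isGood u v c) : isGood v u (-c) := by
  obtain ⟨hu, hv, h1, h2, h3⟩ := h
  refine ⟨hv, hu, by linear_combination h2, by linear_combination h1, ?_⟩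
  rw [map_neg, ← h3]
  ring

set_option maxHeartbeats 1000000 in
lemma forward_good {u v : RatFunc ℂ} {c : ℂ} (h : isGood u v c) (hc : c - 1 / 3 ≠ 0) :
    isGood (-(1 / 6 : RatFunc ℂ) * RatFunc.X * u - rfD u ^ 2 / u +
      (1 / 2 : RatFunc ℂ) * rfD (rfD u)) (1 / u) (c - 1 / 3) := by
  obtain ⟨hu, hv, h1, h2, h3⟩ := h
  set a := rfD u with ha
  set b := rfD v with hb
  have ea : rfD a = -(2 * u ^ 2 * v) - (1 / 3 : RatFunc ℂ) * RatFunc.X * u := by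
    linear_combination h1
  have eb : rfD b = -(2 * u * v ^ 2) - (1 / 3 : RatFunc ℂ) * RatFunc.X * v := by
    linear_combination h2
  have hb2 : b = (a * v - RatFunc.C c) / u := by
    rw [eq_div_iff hu]
    linear_combination -h3
  have hCc : RatFunc.C (c - 1 / 3) = RatFunc.C c - (1 / 3 : RatFunc ℂ) := by
    rw [map_sub, C_third]
  have hW : rfD (-(1 / 6 : RatFunc ℂ) * RatFunc.X * u - a ^ 2 / u +
        (1 / 2 : RatFunc ℂ) * rfD a) * (1 / u) -
      (-(1 / 6 : RatFunc ℂ) * RatFunc.X * u - a ^ 2 / u +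
        (1 / 2 : RatFunc ℂ) * rfD a) * rfD (1 / u) = RatFunc.C (c - 1 / 3) := by
    rw [hCc]
    simp only [rfD_add, rfD_sub, rfD_neg, rfD_mul, rfD_div, rfD_sq, rfD_X, rfD_one,
      rfD_natCast, rfD_ofNat, rfD_C, rfD_zero, ← ha, ← hb, ea, eb, hb2]
    field_simp
    try ring_nf
    try field_simp
    try ring
  refine ⟨?_, by simp [hu], ?_, ?_, hW⟩
  · intro h0
    rw [h0, rfD_zero] at hW
    rw [zero_mul, zero_mul, sub_zero] at hW
    exact C_ne_zero' hc hW.symm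
  · simp only [rfD_add, rfD_sub, rfD_neg, rfD_mul, rfD_div, rfD_sq, rfD_X, rfD_one,
      rfD_natCast, rfD_ofNat, rfD_C, rfD_zero, ← ha, ← hb, ea, eb]
    field_simp
    try ring_nf
    try field_simp
    try ring
  · simp only [rfD_add, rfD_sub, rfD_neg, rfD_mul, rfD_div, rfD_sq, rfD_X, rfD_one,
      rfD_natCast, rfD_ofNat, rfD_C, rfD_zero, ← ha, ← hb, ea, eb]
    field_simp
    try ring_nf
    try field_simp
    try ring

lemma backward_good {u v : RatFunc ℂ} {c : ℂ} (h : isGood u v c) (hc : c + 1 / 3 ≠ 0) :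
    isGood (1 / v) ((1 / 2 : RatFunc ℂ) * rfD (rfD v) - rfD v ^ 2 / v -
      (1 / 6 : RatFunc ℂ) * RatFunc.X * v) (c + 1 / 3) := by
  have h2 := swap_good (forward_good (swap_good h)
    (show -c - 1 / 3 ≠ 0 by intro h0; apply hc; linear_combination -h0))
  rw [show (-(-c - 1 / 3)) = c + 1 / 3 by ring] at h2
  rw [show (-(1 / 6 : RatFunc ℂ) * RatFunc.X * v - rfD v ^ 2 / v +
      (1 / 2 : RatFunc ℂ) * rfD (rfD v)) = ((1 / 2 : RatFunc ℂ) * rfD (rfD v) -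
      rfD v ^ 2 / v - (1 / 6 : RatFunc ℂ) * RatFunc.X * v) from by ring] at h2
  exact h2

lemma pos_good (n : ℕ) : isGood (UVpos n).1 (UVpos n).2 (1 / 6 - n / 3) := by
  induction n with
  | zero =>
    rw [show ((1 : ℂ) / 6 - (0 : ℕ) / 3) = 1 / 6 by norm_num]
    exact base_good
  | succ n ih =>
    have hc : ((1 : ℂ) / 6 - n / 3) - 1 / 3 ≠ 0 := by
      intro h0
      have h1 : ((2 * n + 1 : ℕ) : ℂ) = 0 := by push_cast; linear_combination -6 * h0
      exact Nat.cast_ne_zero.mpr (by omega) h1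
    have h := forward_good ih hc
    rw [show ((1 : ℂ) / 6 - ((n + 1 : ℕ) : ℂ) / 3) = (1 / 6 - n / 3 - 1 / 3) by
      push_cast; ring]
    exact h

lemma neg_good (n : ℕ) : isGood (UVneg n).1 (UVneg n).2 (1 / 6 + n / 3) := by
  induction n with
  | zero =>
    rw [show ((1 : ℂ) / 6 + (0 : ℕ) / 3) = 1 / 6 by norm_num]
    exact base_good
  | succ n ih =>
    have hc : ((1 : ℂ) / 6 + n / 3) + 1 / 3 ≠ 0 := by
      intro h0
      have h1 : ((2 * n + 3 : ℕ) : ℂ) = 0 := by push_cast; linear_combination 6 * h0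
      exact Nat.cast_ne_zero.mpr (by omega) h1
    have h := backward_good ih hc
    rw [show ((1 : ℂ) / 6 + ((n + 1 : ℕ) : ℂ) / 3) = (1 / 6 + n / 3 + 1 / 3) by
      push_cast; ring]
    exact h


/-- For every integer `m`, the rational functions `𝒰_m` and `𝒱_m` are nonzero elements of
`ℂ(y)`, and the pair `{u,v} = {𝒰_m, 𝒱_m}` solves the coupled Painlevé-II system
`u'' + 2u²v + (1/3)yu = 0`, `v'' + 2uv² + (1/3)yv = 0` as identities in `ℂ(y)`. -/
theorem rational_coupled_PII_system (m : ℤ) :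
    𝒰 m ≠ 0 ∧ 𝒱 m ≠ 0 ∧
      rfD (rfD (𝒰 m)) + 2 * 𝒰 m ^ 2 * 𝒱 m + (1 / 3 : RatFunc ℂ) * RatFunc.X * 𝒰 m = 0 ∧
      rfD (rfD (𝒱 m)) + 2 * 𝒰 m * 𝒱 m ^ 2 + (1 / 3 : RatFunc ℂ) * RatFunc.X * 𝒱 m = 0 := by
  rcases le_or_gt 0 m with hm | hm
  · have h := pos_good m.toNat
    rw [𝒰, 𝒱, if_pos hm, if_pos hm]
    exact ⟨h.1, h.2.1, h.2.2.1, h.2.2.2.1⟩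
  · have h := neg_good (-m).toNat
    rw [𝒰, 𝒱, if_neg (not_le.mpr hm), if_neg (not_le.mpr hm)]
    exact ⟨h.1, h.2.1, h.2.2.1, h.2.2.2.1⟩
end

section
/- Suppose u and v solve the coupled Painlevé-II system on D. Then ν := v·u' − u·v' is constant on D, and the product w := u·v satisfies the Painlevé-XXXIV equation: at every point y ∈ D with w(y) ≠ 0, w''(y) = w'(y)²/(2·w(y)) − 4·w(y)² − (2/3)·y·w(y) − ν²/(2·w(y)). -/
/-- Suppose `u` and `v` are analytic on a nonempty open connected set `D ⊆ ℂ` and solve the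
coupled Painlevé-II system `u'' + 2u²v + (1/3)yu = 0`, `v'' + 2uv² + (1/3)yv = 0` on `D`.
Then `ν := v·u' − u·v'` is constant on `D`, and the product `w := u·v` satisfies the
Painlevé-XXXIV equation `w'' = (w')²/(2w) − 4w² − (2/3)yw − ν²/(2w)` at every point of `D`
where `w` does not vanish. -/
theorem coupled_PII_gives_PXXXIV (D : Set ℂ) (hD : IsOpen D) (hne : D.Nonempty)
    (hconn : IsPreconnected D) (u v : ℂ → ℂ)
    (hu : AnalyticOnNhd ℂ u D) (hv : AnalyticOnNhd ℂ v D)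
    (hueq : ∀ y ∈ D, deriv (deriv u) y + 2 * u y ^ 2 * v y + (1 / 3) * y * u y = 0)
    (hveq : ∀ y ∈ D, deriv (deriv v) y + 2 * u y * v y ^ 2 + (1 / 3) * y * v y = 0) :
    ∃ ν : ℂ,
      (∀ y ∈ D, v y * deriv u y - u y * deriv v y = ν) ∧
      (∀ y ∈ D, u y * v y ≠ 0 →
        deriv (deriv fun t => u t * v t) y =
          (deriv (fun t => u t * v t) y) ^ 2 / (2 * (u y * v y)) - 4 * (u y * v y) ^ 2 -
            (2 / 3) * y * (u y * v y) - ν ^ 2 / (2 * (u y * v y))) := by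
  -- differentiability facts
  have hud : ∀ y ∈ D, DifferentiableAt ℂ u y := fun y hy => (hu y hy).differentiableAt
  have hvd : ∀ y ∈ D, DifferentiableAt ℂ v y := fun y hy => (hv y hy).differentiableAt
  have hu' : AnalyticOnNhd ℂ (deriv u) D := hu.deriv
  have hv' : AnalyticOnNhd ℂ (deriv v) D := hv.deriv
  have hud' : ∀ y ∈ D, DifferentiableAt ℂ (deriv u) y := fun y hy => (hu' y hy).differentiableAt
  have hvd' : ∀ y ∈ D, DifferentiableAt ℂ (deriv v) y := fun y hy => (hv' y hy).differentiableAt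
  -- second derivatives from the equations
  have huu : ∀ y ∈ D, deriv (deriv u) y = -(2 * u y ^ 2 * v y + (1 / 3) * y * u y) := by
    intro y hy; linear_combination hueq y hy
  have hvv : ∀ y ∈ D, deriv (deriv v) y = -(2 * u y * v y ^ 2 + (1 / 3) * y * v y) := by
    intro y hy; linear_combination hveq y hy
  -- the Wronskian-type function
  set g : ℂ → ℂ := fun t => v t * deriv u t - u t * deriv v t with hg
  have hgan : AnalyticOnNhd ℂ g D := (hv.mul hu').sub (hu.mul hv')
  have hgd : ∀ y ∈ D, DifferentiableAt ℂ g y := fun y hy => (hgan y hy).differentiableAt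
  have hgderiv : ∀ y ∈ D, deriv g y = 0 := by
    intro y hy
    have h1 : deriv g y = (deriv v y * deriv u y + v y * deriv (deriv u) y) -
        (deriv u y * deriv v y + u y * deriv (deriv v) y) := by
      rw [hg]
      rw [deriv_fun_sub (f := fun t => v t * deriv u t) (g := fun t => u t * deriv v t) ((hvd y hy).mul (hud' y hy)) ((hud y hy).mul (hvd' y hy)),
        deriv_fun_mul (hvd y hy) (hud' y hy), deriv_fun_mul (hud y hy) (hvd' y hy)]
    rw [h1, huu y hy, hvv y hy]; ring
  obtain ⟨z₀, hz₀⟩ := hne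
  have hconst : ∀ y ∈ D, g y = g z₀ := by
    have hloc : g =ᶠ[nhds z₀] fun _ => g z₀ := by
      obtain ⟨ε, hε, hball⟩ := Metric.isOpen_iff.1 hD z₀ hz₀
      filter_upwards [Metric.ball_mem_nhds z₀ hε] with t ht
      refine (convex_ball z₀ ε).is_const_of_fderivWithin_eq_zero
        (fun x hx => (hgd x (hball hx)).differentiableWithinAt) ?_ ht
        (Metric.mem_ball_self hε)
      intro x hx
      rw [fderivWithin_eq_fderiv (Metric.isOpen_ball.uniqueDiffOn x hx)
        (hgd x (hball hx))]
      ext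
      simp [← toSpanSingleton_deriv, hgderiv x (hball hx)]
    exact fun y hy => hgan.eqOn_of_preconnected_of_eventuallyEq
      (analyticOnNhd_const : AnalyticOnNhd ℂ (fun _ => g z₀) D) hconn hz₀ hloc hy
  refine ⟨g z₀, fun y hy => hconst y hy, ?_⟩
  intro y hy hw
  have hw1 : ∀ t ∈ D, deriv (fun s => u s * v s) t = deriv u t * v t + u t * deriv v t :=
    fun t ht => deriv_mul (hud t ht) (hvd t ht)
  have hev : deriv (fun s => u s * v s) =ᶠ[nhds y]
      fun t => deriv u t * v t + u t * deriv v t := by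
    filter_upwards [hD.mem_nhds hy] with t ht using hw1 t ht
  have hw2 : deriv (deriv fun s => u s * v s) y =
      deriv (fun t => deriv u t * v t + u t * deriv v t) y := hev.deriv_eq
  have hw3 : deriv (fun t => deriv u t * v t + u t * deriv v t) y =
      (deriv (deriv u) y * v y + deriv u y * deriv v y) +
      (deriv u y * deriv v y + u y * deriv (deriv v) y) := by
    rw [deriv_fun_add (f := fun t => deriv u t * v t) (g := fun t => u t * deriv v t) ((hud' y hy).mul (hvd y hy)) ((hud y hy).mul (hvd' y hy)),
      deriv_fun_mul (hud' y hy) (hvd y hy), deriv_fun_mul (hud y hy) (hvd' y hy)]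
  have hnu : g z₀ = v y * deriv u y - u y * deriv v y := (hconst y hy).symm
  rw [hw2, hw3, hw1 y hy, huu y hy, hvv y hy, hnu]
  have hu0 : u y ≠ 0 := left_ne_zero_of_mul hw
  have hv0 : v y ≠ 0 := right_ne_zero_of_mul hw
  field_simp
  ring
end

section
/- Suppose u and v solve the coupled Painlevé-II system on D, and let ν denote the constant value of v·u' − u·v' on D. Then the logarithmic derivative p := u'/u satisfies an inhomogeneous Painlevé-II equation: at every point y ∈ D with u(y) ≠ 0, p''(y) = 2·p(y)³ + (2/3)·y·p(y) + 2·ν − 1/3. -/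
/-- Suppose `u` and `v` are analytic on a nonempty open connected set `D ⊆ ℂ` and solve the
coupled Painlevé-II system `u'' + 2u²v + (1/3)yu = 0`, `v'' + 2uv² + (1/3)yv = 0` on `D`,
and let `ν` denote the constant value of `v·u' − u·v'` on `D`.  Then the logarithmic
derivative `p := u'/u` satisfies the inhomogeneous Painlevé-II equation
`p'' = 2p³ + (2/3)yp + 2ν − 1/3` at every point of `D` where `u` does not vanish. -/
theorem coupled_PII_log_derivative_PII (D : Set ℂ) (hD : IsOpen D) (hne : D.Nonempty)
    (hconn : IsPreconnected D) (u v : ℂ → ℂ)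
    (hu : AnalyticOnNhd ℂ u D) (hv : AnalyticOnNhd ℂ v D)
    (hueq : ∀ y ∈ D, deriv (deriv u) y + 2 * u y ^ 2 * v y + (1 / 3) * y * u y = 0)
    (hveq : ∀ y ∈ D, deriv (deriv v) y + 2 * u y * v y ^ 2 + (1 / 3) * y * v y = 0)
    (ν : ℂ) (hν : ∀ y ∈ D, v y * deriv u y - u y * deriv v y = ν) :
    ∀ y ∈ D, u y ≠ 0 →
      deriv (deriv fun t => deriv u t / u t) y =
        2 * (deriv u y / u y) ^ 3 + (2 / 3) * y * (deriv u y / u y) + 2 * ν - 1 / 3 := by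
  intro y hy hne0
  have hu1 : AnalyticOnNhd ℂ (deriv u) D := hu.deriv
  have hu2 : AnalyticOnNhd ℂ (deriv (deriv u)) D := hu1.deriv
  have hevD : ∀ᶠ t in nhds y, t ∈ D := hD.mem_nhds hy
  have hevne : ∀ᶠ t in nhds y, u t ≠ 0 := (hu y hy).continuousAt.eventually_ne hne0
  -- Step 1: first derivative of p by quotient rule, eventually near y
  have h1 : (fun t => deriv (fun s => deriv u s / u s) t)
      =ᶠ[nhds y] fun t => (deriv (deriv u) t * u t - deriv u t * deriv u t) / u t ^ 2 := by
    filter_upwards [hevD, hevne] with t htD htne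
    exact deriv_div (hu1 t htD).differentiableAt (hu t htD).differentiableAt htne
  -- basic HasDerivAt facts at y
  have hUd : HasDerivAt u (deriv u y) y := (hu y hy).differentiableAt.hasDerivAt
  have hVd : HasDerivAt v (deriv v y) y := (hv y hy).differentiableAt.hasDerivAt
  have hB : HasDerivAt (deriv u) (deriv (deriv u) y) y :=
    (hu1 y hy).differentiableAt.hasDerivAt
  -- rewrite u'' using the ODE, eventually
  have hAev : deriv (deriv u) =ᶠ[nhds y]
      fun t => -(2 * u t ^ 2 * v t + (1 / 3) * t * u t) := by
    filter_upwards [hevD] with t htD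
    have := hueq t htD
    linear_combination this
  have hg : HasDerivAt (fun t => -(2 * u t ^ 2 * v t + (1 / 3) * t * u t))
      (-((2 * ((2 : ℕ) * u y ^ 1 * deriv u y)) * v y + (2 * u y ^ 2) * deriv v y
        + ((1 / 3 * 1) * u y + (1 / 3 * y) * deriv u y))) y := by
    have h := ((((hUd.pow 2).const_mul (2 : ℂ)).mul hVd).add
      (((hasDerivAt_id y).const_mul ((1 : ℂ) / 3)).mul hUd)).neg
    refine h.congr_deriv ?_
    simp only [Pi.pow_apply, id]
  have hA : HasDerivAt (deriv (deriv u))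
      (-((2 * ((2 : ℕ) * u y ^ 1 * deriv u y)) * v y + (2 * u y ^ 2) * deriv v y
        + ((1 / 3 * 1) * u y + (1 / 3 * y) * deriv u y))) y :=
    hg.congr_of_eventuallyEq hAev
  -- derivative of the numerator and denominator
  have hN : HasDerivAt (fun t => deriv (deriv u) t * u t - deriv u t * deriv u t)
      ((-((2 * ((2 : ℕ) * u y ^ 1 * deriv u y)) * v y + (2 * u y ^ 2) * deriv v y
        + ((1 / 3 * 1) * u y + (1 / 3 * y) * deriv u y))) * u y
        + deriv (deriv u) y * deriv u y
        - (deriv (deriv u) y * deriv u y + deriv u y * deriv (deriv u) y)) y :=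
    (hA.mul hUd).sub (hB.mul hB)
  have hDen : HasDerivAt (fun t => u t ^ 2) ((2 : ℕ) * u y ^ 1 * deriv u y) y := hUd.pow 2
  have hq : HasDerivAt (fun t => (deriv (deriv u) t * u t - deriv u t * deriv u t) / u t ^ 2) _ y :=
    hN.div hDen (pow_ne_zero 2 hne0)
  rw [h1.deriv_eq, hq.deriv]
  have hA0 : deriv (deriv u) y = -(2 * u y ^ 2 * v y + (1 / 3) * y * u y) := by
    linear_combination hueq y hy
  have hν0 : v y * deriv u y - u y * deriv v y = ν := hν y hy
  rw [hA0, ← hν0]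
  field_simp
  ring
end

section
/- The rational Painlevé-II functions have the following rotational symmetry under y ↦ e^{−2πi/3}y: for every integer m and every y ∈ ℂ at which the relevant rational function has no pole, 𝒰_m(e^{−2πi/3}·y) = e^{−2mπi/3}·𝒰_m(y), 𝒱_m(e^{−2πi/3}·y) = e^{2(m−1)πi/3}·𝒱_m(y), 𝒫_m(e^{−2πi/3}·y) = e^{2πi/3}·𝒫_m(y), and 𝒬_m(e^{−2πi/3}·y) = e^{2πi/3}·𝒬_m(y). -/
/-- Evaluation of a complex rational function at a point of `ℂ` (junk value `0/0 = 0` at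
poles); a point `y` is a pole of `f` iff the lowest-terms denominator `f.denom`
vanishes at `y`. -/
noncomputable def rfEval (y : ℂ) (f : RatFunc ℂ) : ℂ := RatFunc.eval (RingHom.id ℂ) y f

/-! ### Auxiliary development: the rotation automorphism of `ℂ(y)` -/

open Polynomial

local notation "am" => algebraMap (Polynomial ℂ) (RatFunc ℂ)
local notation "CC" => algebraMap ℂ (RatFunc ℂ)

/-- the rotation `ω = e^{-2πi/3}` -/
noncomputable def ww : ℂ := Complex.exp (-(2 * Real.pi * Complex.I) / 3)

lemma ww_ne : ww ≠ 0 := Complex.exp_ne_zero _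

lemma ww_cube : ww ^ 3 = 1 := by
  rw [ww, ← Complex.exp_nat_mul]
  have : ((3 : ℕ) : ℂ) * (-(2 * Real.pi * Complex.I) / 3) = (-1 : ℤ) * (2 * Real.pi * Complex.I) := by
    push_cast; ring
  rw [this, Complex.exp_int_mul_two_pi_mul_I]

/-- the substitution polynomial `ωX` -/
noncomputable def ττ : Polynomial ℂ := C ww * X

/-- substitution `p(y) ↦ p(ωy)` on polynomials, as a ring hom -/
noncomputable def φσ : Polynomial ℂ →+* Polynomial ℂ := eval₂RingHom C ττ

lemma φσ_apply (p : Polynomial ℂ) : φσ p = p.comp ττ := rfl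

lemma φσ_inj : Function.Injective φσ := by
  have key : ∀ p : Polynomial ℂ, (φσ p).comp (C ww⁻¹ * X) = p := by
    intro p
    rw [φσ_apply, comp_assoc]
    have : ττ.comp (C ww⁻¹ * X) = X := by
      simp [ττ, mul_comp, C_comp, X_comp, ← mul_assoc, ← C_mul, mul_inv_cancel₀ ww_ne]
    rw [this, comp_X]
  intro a b hab
  rw [← key a, hab, key b]

lemma φσ_ne_zero {p : Polynomial ℂ} (hp : p ≠ 0) : φσ p ≠ 0 := by
  intro h
  exact hp (φσ_inj (h.trans (map_zero φσ).symm))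

lemma φσ_derivative (p : Polynomial ℂ) :
    derivative (φσ p) = C ww * φσ (derivative p) := by
  rw [φσ_apply, φσ_apply, derivative_comp]
  congr 1
  simp [ττ]

lemma φσ_eval (p : Polynomial ℂ) (y : ℂ) : (φσ p).eval y = p.eval (ww * y) := by
  rw [φσ_apply, eval_comp]
  congr 1
  simp [ττ]

/-- the rotation automorphism of `ℂ(y)` -/
noncomputable def σ : RatFunc ℂ →+* RatFunc ℂ :=
  RatFunc.liftRingHom ((algebraMap (Polynomial ℂ) (RatFunc ℂ)).comp φσ) (by
    intro p hp
    rw [mem_nonZeroDivisors_iff_ne_zero] at hp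
    simp only [Submonoid.mem_comap, RingHom.coe_comp, Function.comp_apply,
      mem_nonZeroDivisors_iff_ne_zero]
    exact RatFunc.algebraMap_ne_zero (φσ_ne_zero hp))

lemma σ_div (p q : Polynomial ℂ) :
    σ (am p / am q) = am (φσ p) / am (φσ q) :=
  RatFunc.liftRingHom_apply_div _ _ p q

lemma σ_algebraMap (p : Polynomial ℂ) : σ (am p) = am (φσ p) := by
  simpa using σ_div p 1

lemma CC_eq (k : ℂ) : CC k = am (C k) := by
  rw [RatFunc.algebraMap_C, RatFunc.algebraMap_eq_C]

lemma CC_ne {k : ℂ} (hk : k ≠ 0) : (CC k : RatFunc ℂ) ≠ 0 := fun h0 =>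
  hk (RingHom.injective (algebraMap ℂ (RatFunc ℂ)) (by rw [h0, map_zero]))

lemma σ_X : σ RatFunc.X = CC ww * RatFunc.X := by
  rw [show (RatFunc.X : RatFunc ℂ) = am X from rfl, σ_algebraMap, φσ_apply, X_comp, ττ,
    map_mul, ← CC_eq]

lemma rfD_eq (f : RatFunc ℂ) :
    rfD f = am (derivative f.num * f.denom - f.num * derivative f.denom) / am (f.denom ^ 2) := by
  rw [rfD, map_sub, map_mul, map_mul, map_pow]

lemma rfD_div_s6 (p q : Polynomial ℂ) (hq : q ≠ 0) :
    rfD (am p / am q) = am (derivative p * q - p * derivative q) / am (q ^ 2) := by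
  set f : RatFunc ℂ := am p / am q with hf
  have hd : f.denom ≠ 0 := f.denom_ne_zero
  have hamq : am q ≠ 0 := RatFunc.algebraMap_ne_zero hq
  have hamd : am f.denom ≠ 0 := RatFunc.algebraMap_ne_zero hd
  have hcross : p * f.denom = f.num * q := by
    apply RatFunc.algebraMap_injective ℂ
    rw [map_mul, map_mul]
    rw [← div_eq_div_iff hamq hamd]
    exact f.num_div_denom.symm
  have hdvd : f.denom ∣ q := by
    refine (f.isCoprime_num_denom.symm).dvd_of_dvd_mul_left ?_
    exact ⟨p, by linear_combination -hcross⟩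
  obtain ⟨c, hc⟩ := hdvd
  have hc0 : c ≠ 0 := by rintro rfl; simp at hc; exact hq hc
  have hp : p = f.num * c := by
    have : p * f.denom = (f.num * c) * f.denom := by
      rw [hcross, hc]; ring
    exact mul_right_cancel₀ hd this
  rw [rfD_eq f, hp, hc]
  rw [div_eq_div_iff (by simpa using RatFunc.algebraMap_ne_zero (pow_ne_zero 2 hd))
    (by simpa using RatFunc.algebraMap_ne_zero (pow_ne_zero 2 (mul_ne_zero hd hc0)))]
  rw [← map_mul, ← map_mul]
  apply congrArg
  simp only [derivative_mul]
  ring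

lemma CC_mul_eq (k : ℂ) (f : RatFunc ℂ) :
    CC k * f = am (C k * f.num) / am f.denom := by
  rw [map_mul, ← CC_eq]
  conv_lhs => rw [← f.num_div_denom]
  ring

lemma rfD_C_mul (k : ℂ) (f : RatFunc ℂ) : rfD (CC k * f) = CC k * rfD f := by
  have hd : f.denom ≠ 0 := f.denom_ne_zero
  rw [CC_mul_eq, rfD_div_s6 _ _ hd, rfD_eq f]
  simp only [derivative_mul, derivative_C, map_sub, map_mul, map_add, zero_mul, zero_add,
    map_pow, ← CC_eq]
  ring

lemma σ_num_denom (f : RatFunc ℂ) : σ f = am (φσ f.num) / am (φσ f.denom) := by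
  conv_lhs => rw [← f.num_div_denom]
  exact σ_div _ _

lemma rfD_σ (f : RatFunc ℂ) : rfD (σ f) = CC ww * σ (rfD f) := by
  have hd : f.denom ≠ 0 := f.denom_ne_zero
  have hφd : φσ f.denom ≠ 0 := φσ_ne_zero hd
  rw [σ_num_denom, rfD_div_s6 _ _ hφd]
  rw [rfD_eq f, σ_div]
  rw [show (φσ (f.denom ^ 2)) = (φσ f.denom) ^ 2 from map_pow _ _ _]
  rw [map_sub, map_mul, map_mul]
  simp only [φσ_derivative, map_sub, map_mul, map_pow, ← CC_eq]
  ring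

lemma σ_rfD_of {f : RatFunc ℂ} {a : ℂ} (ha : a ≠ 0) (h : σ f = CC a * f) :
    σ (rfD f) = CC (a / ww) * rfD f := by
  have h2 := rfD_σ f
  rw [h, rfD_C_mul] at h2
  have hCCw : (CC ww : RatFunc ℂ) ≠ 0 := CC_ne ww_ne
  apply mul_left_cancel₀ hCCw
  rw [← h2, map_div₀, div_eq_mul_inv]
  linear_combination (-(CC a * rfD f)) * inv_mul_cancel₀ hCCw

lemma σ_inv_of {f : RatFunc ℂ} {a : ℂ} (h : σ f = CC a * f) :
    σ (1 / f) = CC a⁻¹ * (1 / f) := by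
  simp only [one_div, map_inv₀, h, mul_inv]

lemma σ_ratio_of {f : RatFunc ℂ} {a : ℂ} (ha : a ≠ 0) (h : σ f = CC a * f) :
    σ (rfD f / f) = CC ww⁻¹ * (rfD f / f) := by
  have hcoef : a / ww / a = ww⁻¹ := by
    rw [div_right_comm, div_self ha, one_div]
  rw [map_div₀, σ_rfD_of ha h, h, mul_div_mul_comm, ← map_div₀, hcoef]

lemma σ_combo {f : RatFunc ℂ} {a : ℂ} (ha : a ≠ 0) (h : σ f = CC a * f) :
    σ ((1 / 2 : RatFunc ℂ) * rfD (rfD f) - rfD f ^ 2 / f - (1 / 6 : RatFunc ℂ) * RatFunc.X * f)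
      = CC (ww * a) *
        ((1 / 2 : RatFunc ℂ) * rfD (rfD f) - rfD f ^ 2 / f - (1 / 6 : RatFunc ℂ) * RatFunc.X * f) := by
  have hDf := σ_rfD_of ha h
  have hDDf := σ_rfD_of (a := a / ww) (div_ne_zero ha ww_ne) hDf
  have hhalf : σ (1 / 2 : RatFunc ℂ) = (1 / 2 : RatFunc ℂ) := by
    rw [map_div₀, map_one, map_ofNat]
  have hsixth : σ (1 / 6 : RatFunc ℂ) = (1 / 6 : RatFunc ℂ) := by
    rw [map_div₀, map_one, map_ofNat]
  have hw := ww_ne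
  rw [map_sub, map_sub, map_mul, map_mul, map_mul, hhalf, hsixth, map_div₀, map_pow,
    hDDf, hDf, h, σ_X]
  have e1 : a / ww / ww = ww * a := by
    field_simp
    linear_combination -ww_cube
  have e2 : (CC (a / ww) * rfD f) ^ 2 / (CC a * f) = CC (ww * a) * (rfD f ^ 2 / f) := by
    rw [mul_pow, ← map_pow, mul_div_mul_comm, ← map_div₀]
    congr 2
    field_simp
    linear_combination -ww_cube
  rw [e1, e2]
  rw [map_mul (CC) ww a]
  ring

/-! ### The scaling identities for `𝒰` and `𝒱` -/

lemma UVpos_sigma (n : ℕ) :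
    σ (UVpos n).1 = CC (ww ^ (n : ℤ)) * (UVpos n).1 ∧
      σ (UVpos n).2 = CC (ww ^ (1 - (n : ℤ))) * (UVpos n).2 := by
  induction n with
  | zero =>
    have hdef1 : (UVpos 0).1 = 1 := rfl
    have hdef2 : (UVpos 0).2 = -RatFunc.X / 6 := rfl
    constructor
    · rw [hdef1]
      simp
    · rw [hdef2]
      have : ww ^ (1 - ((0 : ℕ) : ℤ)) = ww := by norm_num
      rw [this, map_div₀, map_neg, σ_X, map_ofNat]
      ring
  | succ n ih =>
    have ha : (ww : ℂ) ^ (n : ℤ) ≠ 0 := zpow_ne_zero _ ww_ne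
    have hU := ih.1
    have hdef1 : (UVpos (n + 1)).1 =
        -(1 / 6 : RatFunc ℂ) * RatFunc.X * (UVpos n).1 - rfD (UVpos n).1 ^ 2 / (UVpos n).1 +
          (1 / 2 : RatFunc ℂ) * rfD (rfD (UVpos n).1) := rfl
    have hdef2 : (UVpos (n + 1)).2 = 1 / (UVpos n).1 := rfl
    have hre :
        -(1 / 6 : RatFunc ℂ) * RatFunc.X * (UVpos n).1 - rfD (UVpos n).1 ^ 2 / (UVpos n).1 +
            (1 / 2 : RatFunc ℂ) * rfD (rfD (UVpos n).1)
          = (1 / 2 : RatFunc ℂ) * rfD (rfD (UVpos n).1) - rfD (UVpos n).1 ^ 2 / (UVpos n).1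
            - (1 / 6 : RatFunc ℂ) * RatFunc.X * (UVpos n).1 := by ring
    constructor
    · rw [hdef1, hre, σ_combo ha hU]
      have : ww ^ (((n + 1 : ℕ)) : ℤ) = ww * ww ^ (n : ℤ) := by
        have h1 : (((n + 1 : ℕ)) : ℤ) = (n : ℤ) + 1 := by push_cast; ring
        rw [h1, zpow_add₀ ww_ne, zpow_one]; exact mul_comm _ _
      rw [this]
    · rw [hdef2, σ_inv_of hU]
      have : (ww ^ (n : ℤ))⁻¹ = ww ^ (1 - (((n + 1 : ℕ)) : ℤ)) := by
        rw [← zpow_neg]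
        congr 1
        push_cast; ring
      rw [this]

lemma UVneg_sigma (n : ℕ) :
    σ (UVneg n).1 = CC (ww ^ (-(n : ℤ))) * (UVneg n).1 ∧
      σ (UVneg n).2 = CC (ww ^ (1 + (n : ℤ))) * (UVneg n).2 := by
  induction n with
  | zero =>
    have hdef1 : (UVneg 0).1 = 1 := rfl
    have hdef2 : (UVneg 0).2 = -RatFunc.X / 6 := rfl
    constructor
    · rw [hdef1]
      simp
    · rw [hdef2]
      have : ww ^ (1 + ((0 : ℕ) : ℤ)) = ww := by norm_num
      rw [this, map_div₀, map_neg, σ_X, map_ofNat]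
      ring
  | succ n ih =>
    have ha : (ww : ℂ) ^ (1 + (n : ℤ)) ≠ 0 := zpow_ne_zero _ ww_ne
    have hV := ih.2
    have hdef1 : (UVneg (n + 1)).1 = 1 / (UVneg n).2 := rfl
    have hdef2 : (UVneg (n + 1)).2 =
        (1 / 2 : RatFunc ℂ) * rfD (rfD (UVneg n).2) - rfD (UVneg n).2 ^ 2 / (UVneg n).2 -
          (1 / 6 : RatFunc ℂ) * RatFunc.X * (UVneg n).2 := rfl
    constructor
    · rw [hdef1, σ_inv_of hV]
      have : (ww ^ (1 + (n : ℤ)))⁻¹ = ww ^ (-(((n + 1 : ℕ)) : ℤ)) := by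
        rw [← zpow_neg]
        congr 1
        push_cast; ring
      rw [this]
    · rw [hdef2, σ_combo ha hV]
      have : ww * ww ^ (1 + (n : ℤ)) = ww ^ (1 + (((n + 1 : ℕ)) : ℤ)) := by
        have h1 : (1 + (((n + 1 : ℕ)) : ℤ)) = (1 + (n : ℤ)) + 1 := by push_cast; ring
        rw [h1, zpow_add₀ ww_ne (1 + (n : ℤ)) 1, zpow_one]
        exact mul_comm _ _
      rw [this]

lemma U_sigma (m : ℤ) : σ (𝒰 m) = CC (ww ^ m) * 𝒰 m := by
  by_cases hm : 0 ≤ m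
  · rw [𝒰, if_pos hm]
    have := (UVpos_sigma m.toNat).1
    rwa [Int.toNat_of_nonneg hm] at this
  · rw [𝒰, if_neg hm]
    have := (UVneg_sigma (-m).toNat).1
    rwa [Int.toNat_of_nonneg (by omega), neg_neg] at this

lemma V_sigma (m : ℤ) : σ (𝒱 m) = CC (ww ^ (1 - m)) * 𝒱 m := by
  by_cases hm : 0 ≤ m
  · rw [𝒱, if_pos hm]
    have := (UVpos_sigma m.toNat).2
    rwa [Int.toNat_of_nonneg hm] at this
  · rw [𝒱, if_neg hm]
    have := (UVneg_sigma (-m).toNat).2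
    rwa [Int.toNat_of_nonneg (by omega), show 1 + -m = 1 - m by ring] at this

/-! ### From the `σ`-eigenfunction property to evaluation -/

lemma eval_of_sigma {f : RatFunc ℂ} {k : ℂ} (hk : k ≠ 0) (h : σ f = CC k * f) (y : ℂ)
    (hy : Polynomial.eval y f.denom ≠ 0) :
    rfEval (ww * y) f = k * rfEval y f := by
  have hd : f.denom ≠ 0 := f.denom_ne_zero
  have hφd : φσ f.denom ≠ 0 := φσ_ne_zero hd
  -- cross-multiplied polynomial identity
  have hpoly : φσ f.num * f.denom = C k * f.num * φσ f.denom := by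
    apply RatFunc.algebraMap_injective ℂ
    rw [map_mul, map_mul, map_mul]
    rw [← div_eq_div_iff (RatFunc.algebraMap_ne_zero hφd) (RatFunc.algebraMap_ne_zero hd)]
    rw [mul_div_assoc, ← CC_eq, f.num_div_denom, ← σ_num_denom]
    exact h
  -- the denominator is (up to a constant) σ-invariant
  have hdvd : f.denom ∣ φσ f.denom := by
    have hcop : IsCoprime f.denom (C k * f.num) := by
      exact (isCoprime_mul_unit_left_right
        (Polynomial.isUnit_C.mpr (isUnit_iff_ne_zero.mpr hk)) _ _).mpr
        f.isCoprime_num_denom.symm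
    refine hcop.dvd_of_dvd_mul_left ?_
    exact ⟨φσ f.num, by linear_combination -hpoly⟩
  obtain ⟨c, hc⟩ := hdvd
  have hc0 : c ≠ 0 := by
    rintro rfl; rw [mul_zero] at hc; exact hφd hc
  have hcdeg : c.natDegree = 0 := by
    have h1 : (φσ f.denom).natDegree = f.denom.natDegree := by
      rw [φσ_apply, natDegree_comp, ττ, natDegree_C_mul_X ww ww_ne, mul_one]
    rw [hc, natDegree_mul hd hc0] at h1
    omega
  have hcC : c = C (c.coeff 0) := Polynomial.eq_C_of_natDegree_eq_zero hcdeg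
  have hcc0 : c.coeff 0 ≠ 0 := by
    intro hz; apply hc0; rw [hcC, hz, map_zero]
  have hdω0 : Polynomial.eval (ww * y) f.denom ≠ 0 := by
    have hdω : Polynomial.eval (ww * y) f.denom = Polynomial.eval y f.denom * c.coeff 0 := by
      rw [← φσ_eval, hc, eval_mul]
      congr 1
      conv_lhs => rw [hcC]
      rw [eval_C]
    rw [hdω]; exact mul_ne_zero hy hcc0
  -- evaluate the cross identity at y
  have hev := congrArg (Polynomial.eval y) hpoly
  simp only [eval_mul, eval_C, φσ_eval] at hev
  have heval : ∀ z : ℂ, rfEval z f = Polynomial.eval z f.num / Polynomial.eval z f.denom :=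
    fun _ => rfl
  rw [heval, heval, ← mul_div_assoc, div_eq_div_iff hdω0 hy]
  linear_combination hev

/-- Rotational symmetry of the rational Painlevé-II functions under `y ↦ e^{−2πi/3}y`:
for every integer `m` and every `y ∈ ℂ` at which the relevant rational function has no pole,
`𝒰_m(e^{−2πi/3}y) = e^{−2mπi/3}𝒰_m(y)`, `𝒱_m(e^{−2πi/3}y) = e^{2(m−1)πi/3}𝒱_m(y)`,
`𝒫_m(e^{−2πi/3}y) = e^{2πi/3}𝒫_m(y)`, and `𝒬_m(e^{−2πi/3}y) = e^{2πi/3}𝒬_m(y)`. -/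
theorem rational_PII_rotation (m : ℤ) (y : ℂ) :
    (Polynomial.eval y (𝒰 m).denom ≠ 0 →
      rfEval (Complex.exp (-(2 * Real.pi * Complex.I) / 3) * y) (𝒰 m) =
        Complex.exp (-(2 * (m : ℂ) * Real.pi * Complex.I) / 3) * rfEval y (𝒰 m)) ∧
    (Polynomial.eval y (𝒱 m).denom ≠ 0 →
      rfEval (Complex.exp (-(2 * Real.pi * Complex.I) / 3) * y) (𝒱 m) =
        Complex.exp (2 * ((m : ℂ) - 1) * Real.pi * Complex.I / 3) * rfEval y (𝒱 m)) ∧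
    (Polynomial.eval y (rfD (𝒰 m) / 𝒰 m).denom ≠ 0 →
      rfEval (Complex.exp (-(2 * Real.pi * Complex.I) / 3) * y) (rfD (𝒰 m) / 𝒰 m) =
        Complex.exp (2 * Real.pi * Complex.I / 3) * rfEval y (rfD (𝒰 m) / 𝒰 m)) ∧
    (Polynomial.eval y (rfD (𝒱 m) / 𝒱 m).denom ≠ 0 →
      rfEval (Complex.exp (-(2 * Real.pi * Complex.I) / 3) * y) (rfD (𝒱 m) / 𝒱 m) =
        Complex.exp (2 * Real.pi * Complex.I / 3) * rfEval y (rfD (𝒱 m) / 𝒱 m)) := by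
  have hωm : ∀ mm : ℤ, Complex.exp ((mm : ℂ) * (-(2 * Real.pi * Complex.I) / 3)) = ww ^ mm :=
    fun mm => Complex.exp_int_mul _ mm
  have e1 : Complex.exp (-(2 * (m : ℂ) * Real.pi * Complex.I) / 3) = ww ^ m := by
    rw [← hωm m]; congr 1; ring
  have e2 : Complex.exp (2 * ((m : ℂ) - 1) * Real.pi * Complex.I / 3) = ww ^ (1 - m) := by
    rw [← hωm (1 - m)]; congr 1; push_cast; ring
  have e3 : Complex.exp (2 * Real.pi * Complex.I / 3) = ww⁻¹ := by
    rw [show (ww⁻¹ : ℂ) = ww ^ (-1 : ℤ) by rw [zpow_neg_one], ← hωm (-1)]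
    congr 1; push_cast; ring
  have hwwy : Complex.exp (-(2 * Real.pi * Complex.I) / 3) = ww := rfl
  rw [hwwy, e1, e2, e3]
  refine ⟨?_, ?_, ?_, ?_⟩
  · exact fun hy => eval_of_sigma (zpow_ne_zero _ ww_ne) (U_sigma m) y hy
  · exact fun hy => eval_of_sigma (zpow_ne_zero _ ww_ne) (V_sigma m) y hy
  · exact fun hy => eval_of_sigma (inv_ne_zero ww_ne)
      (σ_ratio_of (zpow_ne_zero _ ww_ne) (U_sigma m)) y hy
  · exact fun hy => eval_of_sigma (inv_ne_zero ww_ne)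
      (σ_ratio_of (zpow_ne_zero _ ww_ne) (V_sigma m)) y hy
end

section
/- Let x₀, S, Δ ∈ ℂ satisfy 6·S² + 3·Δ² = −8·x₀ and 3·S·Δ² = 16, and set Π := S²·(S² − Δ²)/16. Then: (i) S satisfies the cubic equation 3·S³ + 4·x₀·S + 8 = 0; (ii) the quartic factorizes as z⁴ + (2/3)·x₀·z² − (4/3)·z + Π = (z − (S−Δ)/2)·(z − (S+Δ)/2)·(z + S/2)² for all z ∈ ℂ; and (iii) the value p = −S/2 is a double root of this quartic and satisfies 2·p³ + (2/3)·x₀·p − 2/3 = 0, so the constant function p ≡ −S/2 solves both the first-order equation (p')² = p⁴ + (2/3)·x₀·p² − (4/3)·p + Π and the autonomous model Painlevé-II equation p'' = 2·p³ + (2/3)·x₀·p − 2/3. -/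
/-- Genus-zero (degenerate) case of the Boutroux ansatz.  If `6S² + 3Δ² = −8x₀` and
`3SΔ² = 16`, and `Π := S²(S² − Δ²)/16`, then: (i) `3S³ + 4x₀S + 8 = 0`; (ii) the quartic
`z⁴ + (2/3)x₀z² − (4/3)z + Π` factorizes as `(z − (S−Δ)/2)(z − (S+Δ)/2)(z + S/2)²`;
(iii) `p = −S/2` is a double root of the quartic and satisfies
`2p³ + (2/3)x₀p − 2/3 = 0`, so the constant function `p ≡ −S/2` solves both
`(p')² = p⁴ + (2/3)x₀p² − (4/3)p + Π` and `p'' = 2p³ + (2/3)x₀p − 2/3`. -/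
theorem boutroux_genus_zero (x₀ S Δ : ℂ)
    (h1 : 6 * S ^ 2 + 3 * Δ ^ 2 = -8 * x₀) (h2 : 3 * S * Δ ^ 2 = 16) :
    (3 * S ^ 3 + 4 * x₀ * S + 8 = 0) ∧
    (∀ z : ℂ,
      z ^ 4 + (2 / 3) * x₀ * z ^ 2 - (4 / 3) * z + S ^ 2 * (S ^ 2 - Δ ^ 2) / 16 =
        (z - (S - Δ) / 2) * (z - (S + Δ) / 2) * (z + S / 2) ^ 2) ∧
    ((-S / 2) ^ 4 + (2 / 3) * x₀ * (-S / 2) ^ 2 - (4 / 3) * (-S / 2) +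
        S ^ 2 * (S ^ 2 - Δ ^ 2) / 16 = 0 ∧
      4 * (-S / 2) ^ 3 + (4 / 3) * x₀ * (-S / 2) - 4 / 3 = 0) ∧
    (2 * (-S / 2) ^ 3 + (2 / 3) * x₀ * (-S / 2) - 2 / 3 = 0) ∧
    (∀ w : ℂ,
      (deriv (fun _ : ℂ => -S / 2) w) ^ 2 =
        (-S / 2) ^ 4 + (2 / 3) * x₀ * (-S / 2) ^ 2 - (4 / 3) * (-S / 2) +
          S ^ 2 * (S ^ 2 - Δ ^ 2) / 16) ∧
    (∀ w : ℂ,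
      deriv (deriv fun _ : ℂ => -S / 2) w =
        2 * (-S / 2) ^ 3 + (2 / 3) * x₀ * (-S / 2) - 2 / 3) := by
  refine ⟨?_, ?_, ⟨?_, ?_⟩, ?_, ?_, ?_⟩
  · linear_combination (S / 2) * h1 - (1 / 2) * h2
  · intro z; linear_combination (z ^ 2 / 12) * h1 + (z / 12) * h2
  · linear_combination (S ^ 2 / 48) * h1 - (S / 24) * h2
  · linear_combination -(S / 12) * h1 + (1 / 12) * h2
  · linear_combination -(S / 24) * h1 + (1 / 24) * h2
  · intro w
    simp only [deriv_const']
    linear_combination -(S ^ 2 / 48) * h1 + (S / 24) * h2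
  · intro w
    simp only [deriv_const']
    linear_combination (S / 24) * h1 - (1 / 24) * h2
end

section
/- Let a, b, x ∈ ℂ and set S := a + b and Δ := b − a, and assume the genus-zero moment conditions 6·S² + 3·Δ² = −8·x and 3·S·Δ² = 16. Let R₀ > max(|a|, |b|) and let r be an analytic function on {z ∈ ℂ : |z| > R₀} satisfying r(z)² = (z − a)·(z − b) for all such z and r(z)/z → 1 as z → ∞. Then the function g'(z) := (3/2)·z² + (1/2)·x − (3/2)·(z + S/2)·r(z) satisfies g'(z) − 1/z = O(|z|⁻²) as z → ∞. -/
open Filter Asymptotics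

lemma genus_zero_alg_key (a b x z : ℂ)
    (h1 : 6 * (a + b) ^ 2 + 3 * (b - a) ^ 2 = -8 * x)
    (h2 : 3 * (a + b) * (b - a) ^ 2 = 16) (hz : z ≠ 0) :
    (3/2*z^2 + 1/2*x - 1/z)^2 - (3/2*(z+(a+b)/2))^2 * ((z-a)*(z-b))
      = (x^2/4 - 9/16*(a+b)^2*(a*b)) - x * z⁻¹ + (z⁻¹)^2 := by
  field_simp
  linear_combination (192*z^4) * h1 + (192*z^3) * h2


/-- Let `S := a + b`, `Δ := b − a` satisfy the genus-zero moment conditions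
`6S² + 3Δ² = −8x` and `3SΔ² = 16`, and let `r` be an analytic branch of
`√((z−a)(z−b))` on `|z| > R₀` with `r(z)/z → 1` as `z → ∞`.  Then
`g'(z) := (3/2)z² + (1/2)x − (3/2)(z + S/2)r(z)` satisfies `g'(z) − 1/z = O(|z|⁻²)`
as `z → ∞`. -/
theorem genus_zero_gprime_asymptotics (a b x : ℂ)
    (h1 : 6 * (a + b) ^ 2 + 3 * (b - a) ^ 2 = -8 * x)
    (h2 : 3 * (a + b) * (b - a) ^ 2 = 16)
    (R₀ : ℝ) (hR₀ : max ‖a‖ ‖b‖ < R₀)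
    (r : ℂ → ℂ) (hr : AnalyticOnNhd ℂ r {z : ℂ | R₀ < ‖z‖})
    (hr2 : ∀ z : ℂ, R₀ < ‖z‖ → r z ^ 2 = (z - a) * (z - b))
    (hlim : Tendsto (fun z : ℂ => r z / z) (cocompact ℂ) (nhds 1)) :
    (fun z : ℂ =>
        ((3 / 2) * z ^ 2 + (1 / 2) * x - (3 / 2) * (z + (a + b) / 2) * r z) - 1 / z)
      =O[cocompact ℂ] fun z : ℂ => ‖z‖⁻¹ ^ 2 := by
  set C : ℂ := x^2/4 - 9/16*(a+b)^2*(a*b) with hC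
  set F : ℂ → ℂ := fun z =>
      ((3 / 2) * z ^ 2 + (1 / 2) * x - (3 / 2) * (z + (a + b) / 2) * r z) - 1 / z with hF
  set H : ℂ → ℂ := fun z =>
      ((3 / 2) * z ^ 2 + (1 / 2) * x - 1/z) + (3 / 2) * (z + (a + b) / 2) * r z with hH
  -- basic limits and eventual facts
  have hu : Tendsto (fun z : ℂ => z⁻¹) (cocompact ℂ) (nhds 0) := by
    rw [← Metric.cobounded_eq_cocompact]; exact tendsto_inv₀_cobounded
  have hne0 : ∀ᶠ z : ℂ in cocompact ℂ, z ≠ 0 := by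
    filter_upwards [(isCompact_singleton (x := (0:ℂ))).compl_mem_cocompact] with z hz
    simpa using hz
  have hbig : ∀ᶠ z : ℂ in cocompact ℂ, R₀ < ‖z‖ := by
    filter_upwards [(isCompact_closedBall (0:ℂ) R₀).compl_mem_cocompact] with z hz
    simpa [Metric.closedBall, Complex.dist_eq, not_le] using hz
  -- denominator limit : H z / z² → 3
  have hden : Tendsto (fun z : ℂ => H z / z ^ 2) (cocompact ℂ) (nhds 3) := by
    have hcont : Continuous (fun p : ℂ × ℂ =>
        (3/2 : ℂ) + x/2 * p.1^2 - p.1^3 + 3/2 * (1 + (a+b)/2 * p.1) * p.2) := by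
      fun_prop
    have h0 := (hcont.tendsto (0, 1)).comp (hu.prodMk_nhds hlim)
    have h0' : Tendsto (fun z : ℂ =>
        (3/2 : ℂ) + x/2 * (z⁻¹)^2 - (z⁻¹)^3 + 3/2 * (1 + (a+b)/2 * z⁻¹) * (r z / z))
        (cocompact ℂ) (nhds 3) := by
      convert h0 using 2 <;> norm_num
    refine Tendsto.congr' ?_ h0'
    filter_upwards [hne0] with z hz
    rw [hH]
    field_simp
  have hHne : ∀ᶠ z : ℂ in cocompact ℂ, H z / z ^ 2 ≠ 0 :=
    hden.eventually_ne (by norm_num)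
  -- numerator limit
  have hnum : Tendsto (fun z : ℂ => C - x * z⁻¹ + (z⁻¹)^2) (cocompact ℂ) (nhds C) := by
    have hcont : Continuous (fun u : ℂ => C - x * u + u^2) := by fun_prop
    have h0 := (hcont.tendsto 0).comp hu
    convert h0 using 2 <;> norm_num
  -- main limit : F z * z² → C / 3
  have hT : Tendsto (fun z : ℂ => F z * z ^ 2) (cocompact ℂ) (nhds (C / 3)) := by
    refine Tendsto.congr' ?_ (hnum.div hden (by norm_num))
    filter_upwards [hne0, hbig, hHne] with z hz hzR hHz
    have key := genus_zero_alg_key a b x z h1 h2 hz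
    have hrr := hr2 z hzR
    have hH0 : H z ≠ 0 := by
      intro h
      exact hHz (by rw [h, zero_div])
    simp only [Pi.div_apply]
    rw [div_div_eq_mul_div, div_eq_iff hH0, hC, ← key]
    simp only [hF, hH]
    linear_combination ((3/2*(z+(a+b)/2))^2 * z^2) * hrr
  -- conclude
  have hO : (fun z : ℂ => F z * z ^ 2) =O[cocompact ℂ] (fun _ : ℂ => (1:ℂ)) :=
    hT.isBigO_one ℂ
  have hO2 : F =O[cocompact ℂ] fun z : ℂ => (z ^ 2)⁻¹ := by
    have h3 : (fun z : ℂ => (F z * z ^ 2) * (z ^ 2)⁻¹)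
        =O[cocompact ℂ] fun z : ℂ => (1:ℂ) * (z ^ 2)⁻¹ :=
      hO.mul (isBigO_refl _ _)
    refine h3.congr' ?_ ?_
    · filter_upwards [hne0] with z hz
      field_simp
    · filter_upwards with z
      simp
  refine hO2.norm_right.congr_right fun z => ?_
  simp [inv_pow]
end

section
/- Let A, B, C, D, x₀ ∈ ℂ satisfy the moment conditions M₁(A,B,C,D) = 0, M₂(A,B,C,D) = −(4/3)·x₀, and M₃(A,B,C,D) = 4. Let ρ > max(|A|,|B|,|C|,|D|) and let R be an analytic function on {z ∈ ℂ : |z| > ρ} satisfying R(z)² = (z−A)·(z−B)·(z−C)·(z−D) for all such z and R(z)/z² → 1 as z → ∞. Then the function G'(z) := (3/2)·z² + (1/2)·x₀ − (3/2)·R(z) satisfies G'(z) − 1/z = O(|z|⁻²) as z → ∞. -/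
open Filter Asymptotics

/-- Let `A, B, C, D, x₀ ∈ ℂ` satisfy the moment conditions `M₁ = 0`, `M₂ = −(4/3)x₀`,
`M₃ = 4` (with `M_p := A^p + B^p + C^p + D^p`), and let `R` be an analytic branch of
`√((z−A)(z−B)(z−C)(z−D))` on `|z| > ρ` with `R(z)/z² → 1` as `z → ∞`.  Then
`G'(z) := (3/2)z² + (1/2)x₀ − (3/2)R(z)` satisfies `G'(z) − 1/z = O(|z|⁻²)` as `z → ∞`. -/
theorem genus_one_Gprime_asymptotics (A B C D x₀ : ℂ)
    (h1 : A + B + C + D = 0)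
    (h2 : A ^ 2 + B ^ 2 + C ^ 2 + D ^ 2 = -(4 / 3) * x₀)
    (h3 : A ^ 3 + B ^ 3 + C ^ 3 + D ^ 3 = 4)
    (ρ : ℝ)
    (hρ : max (max ‖A‖ ‖B‖) (max ‖C‖ ‖D‖) < ρ)
    (R : ℂ → ℂ) (hR : AnalyticOnNhd ℂ R {z : ℂ | ρ < ‖z‖})
    (hR2 : ∀ z : ℂ, ρ < ‖z‖ → R z ^ 2 = (z - A) * (z - B) * (z - C) * (z - D))
    (hlim : Tendsto (fun z : ℂ => R z / z ^ 2) (cocompact ℂ) (nhds 1)) :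
    (fun z : ℂ => ((3 / 2) * z ^ 2 + (1 / 2) * x₀ - (3 / 2) * R z) - 1 / z)
      =O[cocompact ℂ] fun z : ℂ => ‖z‖⁻¹ ^ 2 := by
  have hinv : Tendsto (fun z : ℂ => z⁻¹) (cocompact ℂ) (nhds 0) := by
    rw [← Metric.cobounded_eq_cocompact]
    exact tendsto_inv₀_cobounded
  -- elementary symmetric function values
  have he2 : A*B + A*C + A*D + B*C + B*D + C*D = (2/3) * x₀ := by
    linear_combination ((A+B+C+D)/2) * h1 - (1/2) * h2
  have he3 : A*B*C + A*B*D + A*C*D + B*C*D = 4/3 := by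
    linear_combination (1/3) * h3
      + ((3*(A*B+A*C+A*D+B*C+B*D+C*D) - (A+B+C+D)^2)/3) * h1
  set S : ℂ → ℂ := fun z => z^2 + x₀/3 - (2/3) * z⁻¹ with hS
  set T : ℂ → ℂ := fun z => S z + R z with hT
  -- large z
  have hbig : ∀ᶠ z : ℂ in cocompact ℂ, max ρ 1 < ‖z‖ :=
    tendsto_norm_cocompact_atTop.eventually (eventually_gt_atTop _)
  have hzρ : ∀ᶠ z : ℂ in cocompact ℂ, ρ < ‖z‖ := by
    filter_upwards [hbig] with z hz
    exact lt_of_le_of_lt (le_max_left _ _) hz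
  have hzne : ∀ᶠ z : ℂ in cocompact ℂ, z ≠ 0 := by
    filter_upwards [hbig] with z hz
    intro h
    rw [h] at hz
    simp only [norm_zero] at hz
    have := le_max_right ρ 1
    linarith
  -- S / z^2 → 1
  have hSlim : Tendsto (fun z : ℂ => S z / z^2) (cocompact ℂ) (nhds 1) := by
    have h0 : Tendsto (fun z : ℂ => 1 + (x₀/3) * (z⁻¹ * z⁻¹) - (2/3) * (z⁻¹ * z⁻¹ * z⁻¹))
        (cocompact ℂ) (nhds (1 + (x₀/3) * ((0:ℂ) * 0) - (2/3) * ((0:ℂ) * 0 * 0))) :=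
      (tendsto_const_nhds.add (tendsto_const_nhds.mul (hinv.mul hinv))).sub
        (tendsto_const_nhds.mul ((hinv.mul hinv).mul hinv))
    simp only [mul_zero, zero_mul, sub_zero, add_zero] at h0
    refine h0.congr' ?_
    filter_upwards [hzne] with z hz
    have hz1 : z * z⁻¹ = 1 := mul_inv_cancel₀ hz
    simp only [hS]
    rw [eq_div_iff (pow_ne_zero 2 hz)]
    linear_combination ((x₀/3 - (2/3) * z⁻¹) * (z⁻¹ * z + 1)) * hz1
  have hTlim : Tendsto (fun z : ℂ => T z / z^2) (cocompact ℂ) (nhds 2) := by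
    have h0 := hSlim.add hlim
    norm_num at h0
    refine h0.congr fun z => ?_
    exact (add_div _ _ _).symm
  have hTinv : Tendsto (fun z : ℂ => z^2 / T z) (cocompact ℂ) (nhds (1/2)) := by
    have h0 := hTlim.inv₀ (two_ne_zero)
    simp only [inv_div] at h0
    simpa [one_div] using h0
  have hTne : ∀ᶠ z : ℂ in cocompact ℂ, T z ≠ 0 := by
    have h0 : ∀ᶠ z : ℂ in cocompact ℂ, z^2 / T z ≠ 0 :=
      hTinv.eventually_ne (by norm_num)
    filter_upwards [h0] with z hz hT0
    exact hz (by simp [hT0])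
  -- S^2 - R^2 is O(1)
  have hUeq : (fun z : ℂ => S z ^ 2 - R z ^ 2) =ᶠ[cocompact ℂ]
      fun z : ℂ => (x₀^2/9 - A*B*C*D) + (-(4/9) * x₀) * z⁻¹ + (4/9) * (z⁻¹ * z⁻¹) := by
    filter_upwards [hzρ, hzne] with z hz hz0
    have hz1 : z * z⁻¹ = 1 := mul_inv_cancel₀ hz0
    rw [hR2 z hz]
    simp only [hS]
    linear_combination z^3 * h1 - z^2 * he2 + z * he3 - (4/3) * z * hz1
  have hU : (fun z : ℂ => S z ^ 2 - R z ^ 2) =O[cocompact ℂ] (fun _ : ℂ => (1:ℂ)) := by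
    have h0 : Tendsto (fun z : ℂ => (x₀^2/9 - A*B*C*D) + (-(4/9) * x₀) * z⁻¹
        + (4/9) * (z⁻¹ * z⁻¹)) (cocompact ℂ)
        (nhds ((x₀^2/9 - A*B*C*D) + (-(4/9) * x₀) * 0 + (4/9) * ((0:ℂ) * 0))) :=
      (tendsto_const_nhds.add (tendsto_const_nhds.mul hinv)).add
        (tendsto_const_nhds.mul (hinv.mul hinv))
    exact (h0.isBigO_one ℂ).congr' (EventuallyEq.symm hUeq) (by rfl)
  -- main estimate
  have hb : (fun z : ℂ => (3/2 : ℂ) * ((S z ^ 2 - R z ^ 2) * (z^2 / T z)))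
      =O[cocompact ℂ] (fun _ : ℂ => (1:ℂ)) := by
    have h0 := (isBigO_const_const (3/2 : ℂ) (one_ne_zero (α := ℂ)) (cocompact ℂ)).mul
      (hU.mul (hTinv.isBigO_one ℂ))
    simpa using h0
  have hc : (fun z : ℂ => z⁻¹ * z⁻¹) =O[cocompact ℂ] fun z : ℂ => ‖z‖⁻¹ ^ 2 := by
    refine isBigO_of_le _ fun z => ?_
    simp [pow_two, abs_of_nonneg (inv_nonneg.2 (norm_nonneg z))]
  have hmain : (fun z : ℂ => (3/2 : ℂ) * ((S z ^ 2 - R z ^ 2) * (z^2 / T z)) * (z⁻¹ * z⁻¹))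
      =O[cocompact ℂ] fun z : ℂ => ‖z‖⁻¹ ^ 2 := by
    have h0 := hb.mul (isBigO_refl (fun z : ℂ => z⁻¹ * z⁻¹) (cocompact ℂ))
    simp only [one_mul] at h0
    exact h0.trans hc
  refine hmain.congr' ?_ (by rfl)
  filter_upwards [hzρ, hzne, hTne] with z hz hz0 hT0
  have hSR : S z - R z = (S z ^ 2 - R z ^ 2) / T z := by
    rw [eq_div_iff hT0, hT]
    ring
  have hz1 : z * z⁻¹ = 1 := mul_inv_cancel₀ hz0
  have key : (3/2 : ℂ) * ((S z ^ 2 - R z ^ 2) * (z^2 / T z)) * (z⁻¹ * z⁻¹)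
      = (3/2 : ℂ) * (S z - R z) := by
    rw [hSR]
    field_simp
  rw [key]
  simp only [hS]
  ring
end

section
/- Let x₀, A, B ∈ ℂ with A ≠ B, and suppose the quadruple (A, B, B, B) satisfies the moment conditions M₁ = 0, M₂ = −(4/3)·x₀, M₃ = 4 (i.e., a triple root B and a simple root A). Then A = −3·B, B³ = −1/6, x₀ = −9·B², and consequently x₀³ = −81/4, so x₀ is one of the three corner points −(81/4)^{1/3}·e^{−2πin/3}, n ∈ {0, 1, −1}, of the elliptic region. Conversely, for every B ∈ ℂ with B³ = −1/6, the quadruple (−3B, B, B, B) satisfies the moment conditions with x₀ = −9·B². -/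
/-- The moments `M_p(A,B,C,D) := A^p + B^p + C^p + D^p`. -/
def moment (p : ℕ) (A B C D : ℂ) : ℂ := A ^ p + B ^ p + C ^ p + D ^ p

lemma cube_root_c : ((((81 / 4 : ℝ) ^ ((1 : ℝ) / 3) : ℝ) : ℂ)) ^ 3 = 81 / 4 := by
  have h : ((81 / 4 : ℝ) ^ ((1 : ℝ) / 3)) ^ (3 : ℕ) = 81 / 4 := by
    rw [← Real.rpow_natCast ((81 / 4 : ℝ) ^ ((1 : ℝ) / 3)) 3, ← Real.rpow_mul (by norm_num)]
    norm_num
  rw [← Complex.ofReal_pow, h]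
  norm_num

lemma omega_cube : Complex.exp (2 * Real.pi * Complex.I / 3) ^ 3 = 1 := by
  have h : ((3 : ℕ) : ℂ) * (2 * Real.pi * Complex.I / 3) = 2 * Real.pi * Complex.I := by
    push_cast; ring
  rw [← Complex.exp_nat_mul, h]
  exact Complex.exp_two_pi_mul_I

lemma omega_ne_one : Complex.exp (2 * Real.pi * Complex.I / 3) ≠ 1 := by
  intro h
  rw [Complex.exp_eq_one_iff] at h
  obtain ⟨n, hn⟩ := h
  have hI : (2 * Real.pi * Complex.I / 3) = ((2 * Real.pi / 3 : ℝ) : ℂ) * Complex.I := by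
    push_cast; ring
  have h1 : ((2 * Real.pi / 3 : ℝ) : ℂ) * Complex.I = ((n * (2 * Real.pi) : ℝ) : ℂ) * Complex.I := by
    rw [← hI, hn]; push_cast; ring
  have h2 : (2 * Real.pi / 3 : ℝ) = n * (2 * Real.pi) := by
    have := mul_right_cancel₀ Complex.I_ne_zero h1
    exact_mod_cast this
  have hpi := Real.pi_pos
  rcases le_or_gt (n : ℝ) 0 with h | h
  · nlinarith
  · have : (1 : ℝ) ≤ n := by exact_mod_cast (by exact_mod_cast h : 0 < n)
    nlinarith

lemma omega_sum : 1 + Complex.exp (2 * Real.pi * Complex.I / 3) +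
    Complex.exp (2 * Real.pi * Complex.I / 3) ^ 2 = 0 := by
  set w := Complex.exp (2 * Real.pi * Complex.I / 3)
  have h3 : w ^ 3 = 1 := omega_cube
  have hne : w - 1 ≠ 0 := sub_ne_zero.mpr omega_ne_one
  have : (w - 1) * (1 + w + w ^ 2) = 0 := by linear_combination h3
  exact (mul_eq_zero.mp this).resolve_left hne

/-- Triple-root case of the moment conditions.  If `A ≠ B` and `(A,B,B,B)` satisfies
`M₁ = 0`, `M₂ = −(4/3)x₀`, `M₃ = 4`, then `A = −3B`, `B³ = −1/6`, `x₀ = −9B²`, hence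
`x₀³ = −81/4`, so `x₀` is one of the three corner points `−(81/4)^{1/3}e^{−2πin/3}`,
`n ∈ {0, 1, −1}`, of the elliptic region.  Conversely, for every `B` with `B³ = −1/6`,
the quadruple `(−3B, B, B, B)` satisfies the moment conditions with `x₀ = −9B²`. -/
theorem moment_conditions_triple_root :
    (∀ x₀ A B : ℂ, A ≠ B →
      moment 1 A B B B = 0 → moment 2 A B B B = -(4 / 3) * x₀ → moment 3 A B B B = 4 →
      A = -3 * B ∧ B ^ 3 = -1 / 6 ∧ x₀ = -9 * B ^ 2 ∧ x₀ ^ 3 = -81 / 4 ∧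
        ∃ n : ℤ, (n = 0 ∨ n = 1 ∨ n = -1) ∧
          x₀ = -((((81 / 4 : ℝ) ^ ((1 : ℝ) / 3) : ℝ) : ℂ) *
            Complex.exp (-(2 * Real.pi * Complex.I * (n : ℂ)) / 3))) ∧
    (∀ B : ℂ, B ^ 3 = -1 / 6 →
      moment 1 (-3 * B) B B B = 0 ∧
        moment 2 (-3 * B) B B B = -(4 / 3) * (-9 * B ^ 2) ∧
        moment 3 (-3 * B) B B B = 4) := by
  constructor
  · intro x₀ A B _ h1 h2 h3
    simp only [moment] at h1 h2 h3
    have hA : A = -3 * B := by linear_combination h1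
    subst hA
    have hB3 : B ^ 3 = -1 / 6 := by linear_combination (-1/24 : ℂ) * h3
    have hx0 : x₀ = -9 * B ^ 2 := by linear_combination (3/4 : ℂ) * h2
    have hx3 : x₀ ^ 3 = -81 / 4 := by
      rw [hx0]
      linear_combination (-729 * B ^ 3 + 729 / 6 : ℂ) * hB3
    refine ⟨rfl, hB3, hx0, hx3, ?_⟩
    set c : ℂ := (((81 / 4 : ℝ) ^ ((1 : ℝ) / 3) : ℝ) : ℂ) with hc
    set w := Complex.exp (2 * Real.pi * Complex.I / 3) with hw
    have hc3 : c ^ 3 = 81 / 4 := cube_root_c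
    have hw3 : w ^ 3 = 1 := omega_cube
    have hsum : 1 + w + w ^ 2 = 0 := omega_sum
    have key : (x₀ + c) * (x₀ + c * w) * (x₀ + c * w ^ 2) = 0 := by
      linear_combination hx3 + (c * x₀ ^ 2 + c ^ 2 * x₀) * hsum +
        (c ^ 2 * x₀ + c ^ 3) * hw3 + hc3
    rcases mul_eq_zero.mp key with h | h
    · rcases mul_eq_zero.mp h with h | h
      · refine ⟨0, Or.inl rfl, ?_⟩
        have he : Complex.exp (-(2 * Real.pi * Complex.I * ((0 : ℤ) : ℂ)) / 3) = 1 := by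
          norm_num
        rw [he, mul_one]
        linear_combination h
      · refine ⟨-1, Or.inr (Or.inr rfl), ?_⟩
        have he : Complex.exp (-(2 * Real.pi * Complex.I * ((-1 : ℤ) : ℂ)) / 3) = w := by
          rw [hw]; push_cast; congr 1; ring
        rw [he]
        linear_combination h
    · refine ⟨1, Or.inr (Or.inl rfl), ?_⟩
      have he : Complex.exp (-(2 * Real.pi * Complex.I * ((1 : ℤ) : ℂ)) / 3) = w ^ 2 := by
        calc Complex.exp (-(2 * Real.pi * Complex.I * ((1 : ℤ) : ℂ)) / 3)
            = Complex.exp (-(2 * Real.pi * Complex.I * ((1 : ℤ) : ℂ)) / 3) *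
              Complex.exp (2 * Real.pi * Complex.I) := by
                rw [Complex.exp_two_pi_mul_I, mul_one]
          _ = Complex.exp (-(2 * Real.pi * Complex.I * ((1 : ℤ) : ℂ)) / 3 +
              2 * Real.pi * Complex.I) := (Complex.exp_add _ _).symm
          _ = w ^ 2 := by rw [hw, sq, ← Complex.exp_add]; push_cast; congr 1; ring
      rw [he]
      linear_combination h
  · intro B hB
    refine ⟨by simp only [moment]; ring, by simp only [moment]; ring, ?_⟩
    simp only [moment]
    linear_combination (-24 : ℂ) * hB
end

section
/- Let x₀, A, B, C ∈ ℂ and suppose the quadruple (A, B, C, C) satisfies the moment conditions M₁ = 0, M₂ = −(4/3)·x₀, M₃ = 4 (i.e., C is a double root). Then, writing S := A + B and Δ := B − A, one has C = −S/2 and the genus-zero relations 6·S² + 3·Δ² = −8·x₀ and 3·S·Δ² = 16 hold; in particular S satisfies the cubic equation 3·S³ + 4·x₀·S + 8 = 0. -/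
/-- Double-root case of the moment conditions.  If `(A,B,C,C)` satisfies `M₁ = 0`,
`M₂ = −(4/3)x₀`, `M₃ = 4`, then with `S := A + B` and `Δ := B − A` one has `C = −S/2`,
the genus-zero relations `6S² + 3Δ² = −8x₀` and `3SΔ² = 16`, and the cubic
`3S³ + 4x₀S + 8 = 0`. -/
theorem moment_conditions_double_root (x₀ A B C : ℂ)
    (h1 : moment 1 A B C C = 0)
    (h2 : moment 2 A B C C = -(4 / 3) * x₀)
    (h3 : moment 3 A B C C = 4) :
    C = -(A + B) / 2 ∧
      6 * (A + B) ^ 2 + 3 * (B - A) ^ 2 = -8 * x₀ ∧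
      3 * (A + B) * (B - A) ^ 2 = 16 ∧
      3 * (A + B) ^ 3 + 4 * x₀ * (A + B) + 8 = 0 := by
  simp only [moment] at h1 h2 h3
  have hC : C = -(A + B) / 2 := by linear_combination h1 / 2
  subst hC
  refine ⟨rfl, by linear_combination 6 * h2, by linear_combination 4 * h3, ?_⟩
  linear_combination 3 * (A + B) * h2 - 2 * h3
end

section
/- Let A, B, C, D ∈ ℂ satisfy A + B + C + D = 0 and A³ + B³ + C³ + D³ = 4. Then A + B ≠ C + D. Moreover, if in addition A, B, C, D are pairwise distinct, then the point z_Q := (A·B − C·D)/(A + B − C − D) is well defined and is distinct from each of A, B, C, and D. -/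
/-- Let `A, B, C, D ∈ ℂ` satisfy `A + B + C + D = 0` and `A³ + B³ + C³ + D³ = 4`.  Then
`A + B ≠ C + D`; moreover if `A, B, C, D` are pairwise distinct, the point
`z_Q := (AB − CD)/(A + B − C − D)` is well defined and distinct from each of
`A`, `B`, `C`, and `D`. -/
theorem zQ_well_defined_and_distinct (A B C D : ℂ)
    (h1 : A + B + C + D = 0) (h3 : A ^ 3 + B ^ 3 + C ^ 3 + D ^ 3 = 4) :
    A + B ≠ C + D ∧
      (A ≠ B → A ≠ C → A ≠ D → B ≠ C → B ≠ D → C ≠ D →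
        (A * B - C * D) / (A + B - C - D) ≠ A ∧
          (A * B - C * D) / (A + B - C - D) ≠ B ∧
          (A * B - C * D) / (A + B - C - D) ≠ C ∧
          (A * B - C * D) / (A + B - C - D) ≠ D) := by
  have hne : A + B ≠ C + D := by
    intro h
    have hB : B = -A := by linear_combination (h1 + h) / 2
    have hD : D = -C := by linear_combination (h1 - h) / 2
    rw [hB, hD] at h3
    have : (0 : ℂ) = 4 := by linear_combination h3
    norm_num at this
  have hd : A + B - C - D ≠ 0 := by
    intro h
    exact hne (by linear_combination h)
  refine ⟨hne, fun hAB hAC hAD hBC hBD hCD => ?_⟩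
  refine ⟨?_, ?_, ?_, ?_⟩ <;> rw [Ne, div_eq_iff hd] <;> intro h
  · exact hAC (by
      have := mul_eq_zero.mp (show (A - C) * (A - D) = 0 by linear_combination -h)
      rcases this with h' | h'
      · linear_combination h'
      · exact absurd (by linear_combination h' : A = D) hAD)
  · exact hBC (by
      have := mul_eq_zero.mp (show (B - C) * (B - D) = 0 by linear_combination -h)
      rcases this with h' | h'
      · linear_combination h'
      · exact absurd (by linear_combination h' : B = D) hBD)
  · exact hAC (by
      have := mul_eq_zero.mp (show (A - C) * (B - C) = 0 by linear_combination h)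
      rcases this with h' | h'
      · linear_combination h'
      · exact absurd (by linear_combination h' : B = C) hBC)
  · exact hAD (by
      have := mul_eq_zero.mp (show (A - D) * (B - D) = 0 by linear_combination h)
      rcases this with h' | h'
      · linear_combination h'
      · exact absurd (by linear_combination h' : B = D) hBD)
end

section
/- For all complex numbers A, B, C, D, the determinant of the 4×4 matrix with rows (1, 1, 1, 1), (2A, 2B, 2C, 2D), (3A², 3B², 3C², 3D²), and (BCD, ACD, ABD, ABC) equals −6·(A−B)·(A−C)·(B−C)·(A−D)·(B−D)·(C−D). In particular, this determinant is nonzero if and only if A, B, C, D are pairwise distinct. -/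
/-- The Jacobian determinant `∂(M₁, M₂, M₃, Π)/∂(A, B, C, D)` of the moment map equals
`−6(A−B)(A−C)(B−C)(A−D)(B−D)(C−D)`; in particular it is nonzero iff `A, B, C, D` are
pairwise distinct. -/
theorem moment_jacobian_det (A B C D : ℂ) :
    Matrix.det
        !![1, 1, 1, 1;
           2 * A, 2 * B, 2 * C, 2 * D;
           3 * A ^ 2, 3 * B ^ 2, 3 * C ^ 2, 3 * D ^ 2;
           B * C * D, A * C * D, A * B * D, A * B * C] =
      -6 * (A - B) * (A - C) * (B - C) * (A - D) * (B - D) * (C - D) ∧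
    (Matrix.det
        !![1, 1, 1, 1;
           2 * A, 2 * B, 2 * C, 2 * D;
           3 * A ^ 2, 3 * B ^ 2, 3 * C ^ 2, 3 * D ^ 2;
           B * C * D, A * C * D, A * B * D, A * B * C] ≠ 0 ↔
      (A ≠ B ∧ A ≠ C ∧ A ≠ D ∧ B ≠ C ∧ B ≠ D ∧ C ≠ D)) := by
  have h : Matrix.det
        !![1, 1, 1, 1;
           2 * A, 2 * B, 2 * C, 2 * D;
           3 * A ^ 2, 3 * B ^ 2, 3 * C ^ 2, 3 * D ^ 2;
           B * C * D, A * C * D, A * B * D, A * B * C] =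
      -6 * (A - B) * (A - C) * (B - C) * (A - D) * (B - D) * (C - D) := by
    simp [Matrix.det_succ_row_zero, Fin.sum_univ_succ, Fin.succAbove, Fin.castSucc, Fin.castAdd, Fin.castLE]
    ring
  refine ⟨h, ?_⟩
  rw [h]
  constructor
  · intro hne
    refine ⟨?_, ?_, ?_, ?_, ?_, ?_⟩ <;>
    · intro he
      apply hne
      rw [he]; ring
  · rintro ⟨h1, h2, h3, h4, h5, h6⟩
    simp only [ne_eq, mul_eq_zero, not_or, sub_eq_zero]
    push_neg
    norm_num
    exact ⟨⟨⟨⟨⟨h1, h2⟩, h4⟩, h3⟩, h5⟩, h6⟩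
end
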